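/- Suppose the null p-values are superuniform, the p-values are block independent with respect to a collection of sets I = (I_j)_{j∈[m]} with j ∈ I_j (i.e., for each j, p_j is independent of the coordinates p_{−I_j} outside I_j), and the filter F is block simple with respect to the same collection I. Then the Focused BH procedure at level q controls the generalized false discovery rate: FDR_F = E[FDP(U*)] ≤ q. -/

import Mathlib

open MeasureTheory Finset
open scoped ENNReal

/-- Total prioritization weight of a prioritization vector. -/
noncomputable def normU {m : ℕ} (U : Fin m → ℝ) : ℝ := ∑ j, U j

/-- Threshold rejection set `R(t,p) = {j : p_j ≤ t}`. -/
noncomputable def Rset {m : ℕ} (t : ℝ) (p : Fin m → ℝ) : Finset (Fin m) :=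
  Finset.univ.filter (fun j => p j ≤ t)

/-- Focused BH FDP estimate `m·t / ‖F(R(t,p),p)‖` (with `x/0 = 0`). -/
noncomputable def FDPhat {m : ℕ} (F : Finset (Fin m) → (Fin m → ℝ) → (Fin m → ℝ))
    (p : Fin m → ℝ) (t : ℝ) : ℝ :=
  (m : ℝ) * t / normU (F (Rset t p) p)

/-- The Focused BH threshold: the largest `t ∈ {0, p_1, ..., p_m}` with `FDPhat(t) ≤ q`. -/
noncomputable def tstar {m : ℕ} (F : Finset (Fin m) → (Fin m → ℝ) → (Fin m → ℝ))
    (q : ℝ) (p : Fin m → ℝ) : ℝ :=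
  sSup {t : ℝ | (t = 0 ∨ ∃ j, t = p j) ∧ FDPhat F p t ≤ q}

/-- Generalized FDP of a prioritization vector (with `0/0 = 0`). -/
noncomputable def genFDP {m : ℕ} (H0 : Finset (Fin m)) (U : Fin m → ℝ) : ℝ :=
  (∑ j ∈ H0, U j) / (∑ j, U j)

/-- A filter outputs prioritization scores in `[0,1]`, vanishing outside the rejection set. -/
def IsFilter {m : ℕ} (F : Finset (Fin m) → (Fin m → ℝ) → (Fin m → ℝ)) : Prop :=
  ∀ (R : Finset (Fin m)) (x : Fin m → ℝ) (j : Fin m),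
    (j ∉ R → F R x j = 0) ∧ F R x j ∈ Set.Icc (0 : ℝ) 1

/-- Null p-values are superuniform. -/
def Superuniform {Ω : Type*} [MeasurableSpace Ω] (μ : Measure Ω) {m : ℕ}
    (p : Ω → Fin m → ℝ) (H0 : Finset (Fin m)) : Prop :=
  ∀ j ∈ H0, ∀ t ∈ Set.Icc (0 : ℝ) 1, μ {ω | p ω j ≤ t} ≤ ENNReal.ofReal t

/-- A filter is block simple with respect to a collection `I` of blocks `I j ∋ j`: if `p1, p2`
agree outside `I j` and `j` can receive a positive prioritization score under both, then
`‖F(R1,p1)‖ = ‖F(R2,p2)‖` whenever `j ∈ R1 ∩ R2` and `R1 \ I j = R2 \ I j`. -/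
def BlockSimpleFilter {m : ℕ} (F : Finset (Fin m) → (Fin m → ℝ) → (Fin m → ℝ))
    (I : Fin m → Finset (Fin m)) : Prop :=
  ∀ (j : Fin m) (p1 p2 : Fin m → ℝ), (∀ i, i ∉ I j → p1 i = p2 i) →
    (∃ R10 : Finset (Fin m), 0 < F R10 p1 j) →
    (∃ R20 : Finset (Fin m), 0 < F R20 p2 j) →
    ∀ R1 R2 : Finset (Fin m), j ∈ R1 → j ∈ R2 → R1 \ I j = R2 \ I j →
      normU (F R1 p1) = normU (F R2 p2)

section Det

variable {m : ℕ} {F : Finset (Fin m) → (Fin m → ℝ) → (Fin m → ℝ)} {q : ℝ} {p : Fin m → ℝ}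

lemma tstarSet_finite : {t : ℝ | (t = 0 ∨ ∃ j, t = p j) ∧ FDPhat F p t ≤ q}.Finite := by
  apply Set.Finite.subset ((Set.finite_singleton (0:ℝ)).union (Set.finite_range p))
  rintro t ⟨h1 | ⟨i, rfl⟩, -⟩
  · exact Or.inl h1
  · exact Or.inr ⟨i, rfl⟩

lemma FDPhat_zero : FDPhat F p 0 = 0 := by
  simp [FDPhat]

lemma tstarSet_zero_mem (hq : 0 ≤ q) :
    (0:ℝ) ∈ {t : ℝ | (t = 0 ∨ ∃ j, t = p j) ∧ FDPhat F p t ≤ q} :=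
  ⟨Or.inl rfl, by rw [FDPhat_zero]; exact hq⟩

lemma tstar_spec (hq : 0 ≤ q) :
    (tstar F q p = 0 ∨ ∃ j, tstar F q p = p j) ∧ FDPhat F p (tstar F q p) ≤ q := by
  have := Set.Nonempty.csSup_mem ⟨0, tstarSet_zero_mem hq⟩ (tstarSet_finite (F := F) (q := q) (p := p))
  exact this

lemma le_tstar (hq : 0 ≤ q) {t : ℝ} (h1 : t = 0 ∨ ∃ j, t = p j) (h2 : FDPhat F p t ≤ q) :
    t ≤ tstar F q p :=
  le_csSup (tstarSet_finite (F := F) (q := q) (p := p)).bddAbove ⟨h1, h2⟩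

lemma tstar_le_one (hq : 0 ≤ q) (hp01 : ∀ i, p i ∈ Set.Icc (0:ℝ) 1) :
    tstar F q p ≤ 1 := by
  rcases (tstar_spec (F := F) (p := p) hq).1 with h | ⟨i, h⟩
  · rw [h]; norm_num
  · rw [h]; exact (hp01 i).2

lemma normU_nonneg (hF : IsFilter F) (R : Finset (Fin m)) (x : Fin m → ℝ) :
    0 ≤ normU (F R x) :=
  Finset.sum_nonneg fun i _ => (hF R x i).2.1

lemma le_normU (hF : IsFilter F) (R : Finset (Fin m)) (x : Fin m → ℝ) (i : Fin m) :
    F R x i ≤ normU (F R x) :=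
  Finset.single_le_sum (fun k _ => (hF R x k).2.1) (mem_univ i)

end Det

section Grid

variable {m : ℕ} (I : Fin m → Finset (Fin m)) (j : Fin m)

/-- Grid points: `0`, `1`, and the coordinates outside `I j`. -/
noncomputable def sPt (z : {i : Fin m // i ∉ I j} → ℝ) : Bool ⊕ {i : Fin m // i ∉ I j} → ℝ :=
  Sum.elim (fun b => if b then 1 else 0) z

noncomputable def nextPt (z : {i : Fin m // i ∉ I j} → ℝ) (s : ℝ) : ℝ :=
  Finset.univ.inf' ⟨Sum.inl true, mem_univ _⟩
    (fun k => if s < sPt I j z k then sPt I j z k else 1)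

noncomputable def Tval (q : ℝ) (g : ℝ → ℝ) (z : {i : Fin m // i ∉ I j} → ℝ) : ℝ :=
  Finset.univ.sup' ⟨Sum.inl true, mem_univ _⟩
    (fun k => if (m:ℝ) * sPt I j z k ≤ q * g (sPt I j z k) then
        min (q * g (sPt I j z k) / m) (nextPt I j z (sPt I j z k)) else 0)

lemma nextPt_le_one (z : {i : Fin m // i ∉ I j} → ℝ) (s : ℝ) : nextPt I j z s ≤ 1 := by
  refine le_trans (Finset.inf'_le _ (mem_univ (Sum.inl true))) ?_
  simp [sPt]

lemma Tval_nonneg {q : ℝ} {g : ℝ → ℝ} (hg : ∀ s, 0 ≤ g s) (hq : 0 ≤ q)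
    (z : {i : Fin m // i ∉ I j} → ℝ) : 0 ≤ Tval I j q g z := by
  refine le_trans ?_ (Finset.le_sup' _ (mem_univ (Sum.inl true)))
  have h1 : sPt I j z (Sum.inl true) = 1 := by simp [sPt]
  rw [h1]
  split
  · refine le_min (div_nonneg (mul_nonneg hq (hg 1)) (Nat.cast_nonneg m)) ?_
    refine Finset.le_inf' _ _ fun k _ => ?_
    split
    · linarith [show (1:ℝ) < sPt I j z k from by assumption]
    · norm_num
  · exact le_refl 0

lemma Tval_le_one {q : ℝ} {g : ℝ → ℝ} (z : {i : Fin m // i ∉ I j} → ℝ) :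
    Tval I j q g z ≤ 1 := by
  refine Finset.sup'_le _ _ fun k _ => ?_
  split
  · exact le_trans (min_le_right _ _) (nextPt_le_one I j z _)
  · norm_num

end Grid

section Key

variable {m : ℕ} {F : Finset (Fin m) → (Fin m → ℝ) → (Fin m → ℝ)}
  {I : Fin m → Finset (Fin m)} {q : ℝ} {p : Fin m → ℝ}

lemma key_det (hI : ∀ j, j ∈ I j) (hF : IsFilter F) (hbs : BlockSimpleFilter F I)
    (hq : 0 < q) (j : Fin m) (hp01 : ∀ i, p i ∈ Set.Icc (0:ℝ) 1)
    {g : ℝ → ℝ} (hg : ∀ s, g s = normU (F (insert j (Rset s p)) p))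
    (hEj : 0 < F (Rset (tstar F q p) p) p j) :
    tstar F q p ≤ Tval I j q g (fun i => p i.1) ∧
    (m:ℝ) * Tval I j q g (fun i => p i.1) ≤ q * normU (F (Rset (tstar F q p) p) p) := by
  set z : {i : Fin m // i ∉ I j} → ℝ := fun i => p i.1 with hz
  set t : ℝ := tstar F q p with htdef
  set N : ℝ := normU (F (Rset t p) p) with hNdef
  have hm : (0:ℝ) < m := by exact_mod_cast j.pos
  have hjR : j ∈ Rset t p := by
    by_contra h
    exact absurd ((hF _ p j).1 h) (ne_of_gt hEj)
  have hpj_le : p j ≤ t := (mem_filter.mp hjR).2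
  have ht0 : 0 ≤ t := le_trans (hp01 j).1 hpj_le
  have ht1 : t ≤ 1 := tstar_le_one hq.le hp01
  have hN : 0 < N := lt_of_lt_of_le hEj (le_normU hF _ _ j)
  have hmtq : (m:ℝ) * t ≤ q * N := by
    have h2 := (tstar_spec (F := F) (p := p) hq.le).2
    rw [FDPhat] at h2
    rw [← htdef, ← hNdef] at h2
    calc (m:ℝ) * t = (m * t / N) * N := by field_simp
    _ ≤ q * N := mul_le_mul_of_nonneg_right h2 hN.le
  have hwit : ∃ R0 : Finset (Fin m), 0 < F R0 p j := ⟨Rset t p, hEj⟩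
  have simple : ∀ R1 R2 : Finset (Fin m), j ∈ R1 → j ∈ R2 → R1 \ I j = R2 \ I j →
      normU (F R1 p) = normU (F R2 p) :=
    fun R1 R2 h1 h2 h3 => hbs j p p (fun _ _ => rfl) hwit hwit R1 R2 h1 h2 h3
  have L1 : ∀ s u, p j ≤ u → Rset s p \ I j = Rset u p \ I j →
      g s = normU (F (Rset u p) p) := by
    intro s u h1 h2
    rw [hg s]
    refine simple _ _ (mem_insert_self j _) (mem_filter.mpr ⟨mem_univ _, h1⟩) ?_
    rw [Finset.insert_sdiff_of_mem _ (hI j)]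
    exact h2
  have hsz : ∀ k, sPt I j z k = 0 ∨ sPt I j z k = 1 ∨ ∃ i, i ∉ I j ∧ sPt I j z k = p i := by
    rintro (b | i)
    · cases b
      · left; simp [sPt]
      · right; left; simp [sPt]
    · right; right; exact ⟨i.1, i.2, rfl⟩
  -- the largest grid point ≤ t
  have hKne : (univ.filter (fun k => sPt I j z k ≤ t)).Nonempty := by
    refine ⟨Sum.inl false, mem_filter.mpr ⟨mem_univ _, ?_⟩⟩
    simpa [sPt] using ht0
  set s' : ℝ := (univ.filter (fun k => sPt I j z k ≤ t)).sup' hKne (sPt I j z) with hs'def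
  have hsle : s' ≤ t := Finset.sup'_le _ _ fun k hk => (mem_filter.mp hk).2
  have hmax : ∀ k, sPt I j z k ≤ t → sPt I j z k ≤ s' := by
    intro k h
    rw [hs'def]
    exact Finset.le_sup' (sPt I j z) (mem_filter.mpr ⟨mem_univ _, h⟩)
  obtain ⟨kstar, -, hkeq⟩ := Finset.exists_mem_eq_sup' hKne (sPt I j z)
  have hC1 : Rset s' p \ I j = Rset t p \ I j := by
    ext i
    simp only [mem_sdiff, Rset, mem_filter, mem_univ, true_and]
    constructor
    · rintro ⟨h1, h2⟩; exact ⟨le_trans h1 hsle, h2⟩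
    · rintro ⟨h1, h2⟩
      refine ⟨?_, h2⟩
      have : sPt I j z (Sum.inr ⟨i, h2⟩) = p i := rfl
      have h3 := hmax (Sum.inr ⟨i, h2⟩) (by rw [this]; exact h1)
      rwa [this] at h3
  have hgs' : g s' = N := L1 s' t hpj_le hC1
  have hnext' : t ≤ nextPt I j z s' := by
    refine Finset.le_inf' _ _ fun k _ => ?_
    split
    · rename_i hlt
      by_contra h'
      push_neg at h'
      exact absurd (hmax k h'.le) (not_le.mpr hlt)
    · exact ht1
  have htqN : t ≤ q * N / m := by
    rw [le_div_iff₀ hm]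
    linarith [hmtq]
  constructor
  · -- t ≤ Tval
    refine le_trans ?_ (Finset.le_sup' _ (mem_univ kstar))
    show t ≤ if (m:ℝ) * sPt I j z kstar ≤ q * g (sPt I j z kstar) then
        min (q * g (sPt I j z kstar) / m) (nextPt I j z (sPt I j z kstar)) else 0
    rw [← hkeq, hgs', if_pos (by nlinarith)]
    exact le_min htqN hnext'
  · -- m * Tval ≤ q * N
    rw [mul_comm]
    rw [← le_div_iff₀ hm]
    refine Finset.sup'_le _ _ fun k _ => ?_
    by_cases hcond : (m:ℝ) * sPt I j z k ≤ q * g (sPt I j z k)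
    swap
    · rw [if_neg hcond]
      exact div_nonneg (mul_nonneg hq.le hN.le) hm.le
    rw [if_pos hcond]
    rcases le_or_gt (sPt I j z k) t with hst | hst
    · rcases le_or_gt (nextPt I j z (sPt I j z k)) t with hnt | hnt
      · exact le_trans (min_le_right _ _) (le_trans hnt htqN)
      · have hset : Rset (sPt I j z k) p \ I j = Rset t p \ I j := by
          ext i
          simp only [mem_sdiff, Rset, mem_filter, mem_univ, true_and]
          constructor
          · rintro ⟨h1, h2⟩; exact ⟨le_trans h1 hst, h2⟩
          · rintro ⟨h1, h2⟩
            refine ⟨?_, h2⟩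
            by_contra h3
            push_neg at h3
            have h4 := Finset.inf'_le (fun k' => if sPt I j z k < sPt I j z k' then
                sPt I j z k' else 1) (mem_univ (Sum.inr ⟨i, h2⟩))
            have h5 : sPt I j z (Sum.inr ⟨i, h2⟩) = p i := rfl
            rw [h5, if_pos h3] at h4
            have : nextPt I j z (sPt I j z k) ≤ p i := h4
            linarith
        have hgN : g (sPt I j z k) = N := L1 _ t hpj_le hset
        exact le_trans (min_le_left _ _) (by rw [hgN])
    · rcases hsz k with h0 | h1 | ⟨i, hi, hpi⟩
      · exfalso; rw [h0] at hst; linarith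
      · -- grid point is 1
        rw [h1] at hcond ⊢
        set tsh : ℝ := univ.sup' ⟨j, mem_univ j⟩ p with htshdef
        have hallle : ∀ i', p i' ≤ tsh := fun i' => Finset.le_sup' _ (mem_univ i')
        have hRsh : Rset tsh p = univ := by
          ext i'; simp [Rset, hallle i']
        have hR1 : Rset (1:ℝ) p = univ := by
          ext i'; simp [Rset, (hp01 i').2]
        have hg1 : g 1 = normU (F (Rset tsh p) p) := L1 1 tsh (hallle j) (by rw [hRsh, hR1])
        have hg1pos : 0 < g 1 := by nlinarith
        have htsh1 : tsh ≤ 1 := Finset.sup'_le _ _ fun i' _ => (hp01 i').2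
        have hFD : FDPhat F p tsh ≤ q := by
          rw [FDPhat, ← hg1, div_le_iff₀ hg1pos]
          nlinarith
        obtain ⟨i', -, hi'⟩ := Finset.exists_mem_eq_sup' (⟨j, mem_univ j⟩ : (univ : Finset (Fin m)).Nonempty) p
        have htsh_le : tsh ≤ t := le_tstar hq.le (Or.inr ⟨i', hi'⟩) hFD
        have hset2 : Rset tsh p \ I j = Rset t p \ I j := by
          ext i''
          simp only [mem_sdiff, Rset, mem_filter, mem_univ, true_and]
          constructor
          · rintro ⟨h1', h2⟩; exact ⟨le_trans h1' htsh_le, h2⟩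
          · rintro ⟨h1', h2⟩; exact ⟨hallle i'', h2⟩
        have hgN : g 1 = N := by
          rw [hg1]
          exact simple _ _ (mem_filter.mpr ⟨mem_univ _, hallle j⟩) hjR hset2
        exact le_trans (min_le_left _ _) (by rw [hgN])
      · -- grid point is p i with i ∉ I j : contradiction with maximality of t
        exfalso
        have hspos : 0 < sPt I j z k := lt_of_le_of_lt ht0 hst
        have hgs : g (sPt I j z k) = normU (F (Rset (sPt I j z k) p) p) :=
          L1 _ _ (le_trans hpj_le hst.le) rfl
        have hgpos : 0 < g (sPt I j z k) := by nlinarith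
        have hFD : FDPhat F p (sPt I j z k) ≤ q := by
          rw [FDPhat, ← hgs, div_le_iff₀ hgpos]
          exact hcond
        have : sPt I j z k ≤ t := le_tstar hq.le (Or.inr ⟨i, hpi⟩) hFD
        linarith

end Key

section Meas

lemma measurable_finset_sup' {δ ι : Type*} [MeasurableSpace δ] {s : Finset ι} (hs : s.Nonempty)
    {f : ι → δ → ℝ} (hf : ∀ i, Measurable (f i)) :
    Measurable fun z => s.sup' hs fun i => f i z := by
  induction hs using Finset.Nonempty.cons_induction with
  | singleton i =>
      have : (fun z => ({i} : Finset ι).sup' (Finset.singleton_nonempty i) fun i => f i z) = f i := by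
        funext z; simp
      rw [this]; exact hf i
  | cons i s hi hne ih =>
      have : (fun z => (Finset.cons i s hi).sup' (Finset.cons_nonempty hi) fun i => f i z) =
          fun z => max (f i z) (s.sup' hne fun i => f i z) := by
        funext z
        rw [Finset.sup'_cons hne]
      rw [this]; exact (hf i).max ih

lemma measurable_finset_inf' {δ ι : Type*} [MeasurableSpace δ] {s : Finset ι} (hs : s.Nonempty)
    {f : ι → δ → ℝ} (hf : ∀ i, Measurable (f i)) :
    Measurable fun z => s.inf' hs fun i => f i z := by
  induction hs using Finset.Nonempty.cons_induction with
  | singleton i =>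
      have : (fun z => ({i} : Finset ι).inf' (Finset.singleton_nonempty i) fun i => f i z) = f i := by
        funext z; simp
      rw [this]; exact hf i
  | cons i s hi hne ih =>
      have : (fun z => (Finset.cons i s hi).inf' (Finset.cons_nonempty hi) fun i => f i z) =
          fun z => min (f i z) (s.inf' hne fun i => f i z) := by
        funext z
        rw [Finset.inf'_cons hne]
      rw [this]; exact (hf i).min ih

variable {m : ℕ} {I : Fin m → Finset (Fin m)} {j : Fin m}

lemma measurable_sPt (k : Bool ⊕ {i : Fin m // i ∉ I j}) :
    Measurable fun z : {i : Fin m // i ∉ I j} → ℝ => sPt I j z k := by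
  rcases k with b | i
  · exact measurable_const
  · exact measurable_pi_apply i

lemma measurable_nextPt (k : Bool ⊕ {i : Fin m // i ∉ I j}) :
    Measurable fun z : {i : Fin m // i ∉ I j} → ℝ => nextPt I j z (sPt I j z k) := by
  unfold nextPt
  refine measurable_finset_inf' _ fun k' => ?_
  exact Measurable.ite (measurableSet_lt (measurable_sPt k) (measurable_sPt k'))
    (measurable_sPt k') measurable_const

lemma measurable_Tval {q : ℝ} {g0 : ({i : Fin m // i ∉ I j} → ℝ) → ℝ → ℝ}
    (hg : ∀ k : Bool ⊕ {i : Fin m // i ∉ I j}, Measurable fun z => g0 z (sPt I j z k)) :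
    Measurable fun z => Tval I j q (g0 z) z := by
  unfold Tval
  refine measurable_finset_sup' _ fun k => ?_
  refine Measurable.ite (measurableSet_le (measurable_const.mul (measurable_sPt k))
    (measurable_const.mul (hg k))) ?_ measurable_const
  exact ((measurable_const.mul (hg k)).div_const _).min (measurable_nextPt k)

lemma measurable_normU_F {F : Finset (Fin m) → (Fin m → ℝ) → (Fin m → ℝ)}
    (hFmeas : ∀ (R : Finset (Fin m)) (i : Fin m), Measurable (fun x : Fin m → ℝ => F R x i))
    (R : Finset (Fin m)) : Measurable fun x : Fin m → ℝ => normU (F R x) := by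
  unfold normU
  exact Finset.measurable_sum _ fun i _ => hFmeas R i

lemma measurableSet_RsetEq {δ : Type*} [MeasurableSpace δ] {σ : δ → ℝ} (hσ : Measurable σ)
    (R : Finset (Fin m)) :
    MeasurableSet {dx : δ × (Fin m → ℝ) | Rset (σ dx.1) dx.2 = R} := by
  have heq : {dx : δ × (Fin m → ℝ) | Rset (σ dx.1) dx.2 = R} =
      ⋂ i : Fin m, {dx : δ × (Fin m → ℝ) | dx.2 i ≤ σ dx.1 ↔ i ∈ R} := by
    ext dx
    simp [Set.mem_iInter, Finset.ext_iff, Rset]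
  rw [heq]
  refine MeasurableSet.iInter fun i => ?_
  have hle : MeasurableSet {dx : δ × (Fin m → ℝ) | dx.2 i ≤ σ dx.1} :=
    measurableSet_le (measurable_snd.eval : Measurable fun dx : δ × (Fin m → ℝ) => dx.2 i)
      (hσ.comp measurable_fst : Measurable fun dx : δ × (Fin m → ℝ) => σ dx.1)
  by_cases hiR : i ∈ R
  · have : {dx : δ × (Fin m → ℝ) | dx.2 i ≤ σ dx.1 ↔ i ∈ R} =
        {dx : δ × (Fin m → ℝ) | dx.2 i ≤ σ dx.1} := by ext dx; simp [hiR]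
    rw [this]; exact hle
  · have : {dx : δ × (Fin m → ℝ) | dx.2 i ≤ σ dx.1 ↔ i ∈ R} =
        {dx : δ × (Fin m → ℝ) | dx.2 i ≤ σ dx.1}ᶜ := by ext dx; simp [hiR]
    rw [this]; exact hle.compl

lemma measurable_v {δ : Type*} [MeasurableSpace δ] {σ : δ → ℝ} (hσ : Measurable σ)
    {F : Finset (Fin m) → (Fin m → ℝ) → (Fin m → ℝ)}
    (hFmeas : ∀ (R : Finset (Fin m)) (i : Fin m), Measurable (fun x : Fin m → ℝ => F R x i)) :
    Measurable fun dx : δ × (Fin m → ℝ) =>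
      normU (F (insert j (Rset (σ dx.1) dx.2)) dx.2) := by
  have heq : (fun dx : δ × (Fin m → ℝ) => normU (F (insert j (Rset (σ dx.1) dx.2)) dx.2)) =
      fun dx => ∑ R : Finset (Fin m),
        if Rset (σ dx.1) dx.2 = R then normU (F (insert j R) dx.2) else 0 := by
    funext dx
    rw [Finset.sum_ite_eq (Finset.univ) (Rset (σ dx.1) dx.2)
      (fun R => normU (F (insert j R) dx.2)), if_pos (mem_univ _)]
  rw [heq]
  refine Finset.measurable_sum _ fun R _ => ?_
  exact Measurable.ite (measurableSet_RsetEq hσ R)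
    ((measurable_normU_F hFmeas (insert j R)).comp measurable_snd) measurable_const

end Meas

section PerJ
open ProbabilityTheory

variable {Ω : Type*} [MeasurableSpace Ω] {μ : Measure Ω} [IsProbabilityMeasure μ]
  {m : ℕ} {F : Finset (Fin m) → (Fin m → ℝ) → (Fin m → ℝ)}
  {I : Fin m → Finset (Fin m)} {q : ℝ} {p : Ω → Fin m → ℝ} {H0 : Finset (Fin m)}

lemma perj (hpmeas : Measurable p) (hp01 : ∀ ω i, p ω i ∈ Set.Icc (0:ℝ) 1)
    (hsuper : Superuniform μ p H0) (hI : ∀ j, j ∈ I j)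
    (hindep : ∀ j : Fin m, ProbabilityTheory.IndepFun
      (fun ω => p ω j) (fun ω => (fun i : {i : Fin m // i ∉ I j} => p ω i)) μ)
    (hF : IsFilter F)
    (hFmeas : ∀ (R : Finset (Fin m)) (i : Fin m), Measurable (fun x : Fin m → ℝ => F R x i))
    (hbs : BlockSimpleFilter F I) (hq : 0 < q)
    (j : Fin m) (hj : j ∈ H0) :
    ∃ ψ : Ω → ℝ, Measurable ψ ∧ (∀ ω, 0 ≤ ψ ω) ∧ Integrable ψ μ ∧ (∫ ω, ψ ω ∂μ) ≤ 1 ∧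
      ∀ᵐ ω ∂μ, F (Rset (tstar F q (p ω)) (p ω)) (p ω) j
        / normU (F (Rset (tstar F q (p ω)) (p ω)) (p ω)) ≤ (q / m) * ψ ω := by
  classical
  let Zv : Ω → ({i : Fin m // i ∉ I j} → ℝ) := fun ω i => p ω i.1
  have hZv : Measurable Zv :=
    measurable_pi_lambda _ fun i => (measurable_pi_apply i.1).comp hpmeas
  have hpj : Measurable fun ω => p ω j := (measurable_pi_apply j).comp hpmeas
  have hpair : Measurable fun ω => (Zv ω, p ω) := hZv.prodMk hpmeas
  set ρ : Measure (({i : Fin m // i ∉ I j} → ℝ) × (Fin m → ℝ)) :=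
    μ.map fun ω => (Zv ω, p ω) with hρdef
  haveI : IsProbabilityMeasure ρ := Measure.isProbabilityMeasure_map hpair.aemeasurable
  set κ := ρ.condKernel with hκdef
  have hρdis : ρ.fst.compProd κ = ρ := ρ.disintegrate κ
  have hρfst : ρ.fst = μ.map Zv := Measure.fst_map_prodMk hpmeas
  set W : Set (Fin m → ℝ) := {x | ∃ R : Finset (Fin m), 0 < F R x j} with hWdef
  have hW : MeasurableSet W := by
    have : W = ⋃ R : Finset (Fin m), {x : Fin m → ℝ | 0 < F R x j} := by
      ext x; simp [hWdef]
    rw [this]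
    exact MeasurableSet.iUnion fun R => measurableSet_lt measurable_const (hFmeas R j)
  set Gf : ({i : Fin m // i ∉ I j} → ℝ) → ℝ → ℝ := fun z s =>
    (∫⁻ x, W.indicator
        (fun x => ENNReal.ofReal (normU (F (insert j (Rset s x)) x))) x ∂κ z).toReal
      / (κ z W).toReal with hGfdef
  have hGf_nonneg : ∀ z s, 0 ≤ Gf z s := fun z s =>
    div_nonneg ENNReal.toReal_nonneg ENNReal.toReal_nonneg
  have hGf_meas : ∀ k : Bool ⊕ {i : Fin m // i ∉ I j},
      Measurable fun z => Gf z (sPt I j z k) := by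
    intro k
    refine Measurable.div ?_ ((Kernel.measurable_coe κ hW).ennreal_toReal)
    refine Measurable.ennreal_toReal ?_
    refine Measurable.lintegral_kernel_prod_right
      (f := fun z x => W.indicator
        (fun x => ENNReal.ofReal (normU (F (insert j (Rset (sPt I j z k) x)) x))) x) ?_
    have heq : (Function.uncurry fun z x => W.indicator
        (fun x => ENNReal.ofReal (normU (F (insert j (Rset (sPt I j z k) x)) x))) x) =
        fun zx : ({i : Fin m // i ∉ I j} → ℝ) × (Fin m → ℝ) =>
          if zx.2 ∈ W then ENNReal.ofReal
            (normU (F (insert j (Rset (sPt I j zx.1 k) zx.2)) zx.2)) else 0 := by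
      funext zx
      simp [Function.uncurry, Set.indicator_apply]
    rw [heq]
    exact Measurable.ite (hW.preimage measurable_snd)
      ((measurable_v (measurable_sPt k) hFmeas).ennreal_ofReal) measurable_const
  set T0 : ({i : Fin m // i ∉ I j} → ℝ) → ℝ := fun z => Tval I j q (Gf z) z with hT0def
  have hT0meas : Measurable T0 := measurable_Tval hGf_meas
  have hT00 : ∀ z, 0 ≤ T0 z := fun z => Tval_nonneg I j (hGf_nonneg z) hq.le z
  have hT01 : ∀ z, T0 z ≤ 1 := fun z => Tval_le_one I j z
  set ψ : Ω → ℝ := fun ω =>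
    if 0 < T0 (Zv ω) ∧ p ω j ≤ T0 (Zv ω) then 1 / T0 (Zv ω) else 0 with hψdef
  have hψmeas : Measurable ψ := by
    refine Measurable.ite ?_ (measurable_const.div (hT0meas.comp hZv)) measurable_const
    exact (measurableSet_lt measurable_const (hT0meas.comp hZv)).inter
      (measurableSet_le hpj (hT0meas.comp hZv))
  have hψ0 : ∀ ω, 0 ≤ ψ ω := by
    intro ω
    rw [hψdef]
    dsimp only
    split
    · rename_i h
      exact le_of_lt (one_div_pos.mpr h.1)
    · exact le_refl 0
  set φ : ℝ × ({i : Fin m // i ∉ I j} → ℝ) → ℝ≥0∞ := fun c =>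
    if 0 < T0 c.2 ∧ c.1 ≤ T0 c.2 then ENNReal.ofReal (1 / T0 c.2) else 0 with hφdef
  have hφmeas : Measurable φ := by
    refine Measurable.ite ?_
      ((measurable_const.div (hT0meas.comp measurable_snd)).ennreal_ofReal) measurable_const
    exact (measurableSet_lt measurable_const (hT0meas.comp measurable_snd)).inter
      (measurableSet_le measurable_fst (hT0meas.comp measurable_snd))
  have hofψ : ∀ ω, ENNReal.ofReal (ψ ω) = φ (p ω j, Zv ω) := by
    intro ω
    rw [hψdef, hφdef]
    dsimp only
    split
    · rfl
    · exact ENNReal.ofReal_zero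
  haveI : IsProbabilityMeasure (μ.map fun ω => p ω j) :=
    Measure.isProbabilityMeasure_map hpj.aemeasurable
  haveI : IsProbabilityMeasure (μ.map Zv) := Measure.isProbabilityMeasure_map hZv.aemeasurable
  have hlint : ∫⁻ ω, ENNReal.ofReal (ψ ω) ∂μ ≤ 1 := by
    have h1 : ∫⁻ ω, ENNReal.ofReal (ψ ω) ∂μ = ∫⁻ ω, φ (p ω j, Zv ω) ∂μ :=
      lintegral_congr fun ω => hofψ ω
    have hmapeq := (indepFun_iff_map_prod_eq_prod_map_map hpj.aemeasurable
      hZv.aemeasurable).mp (hindep j)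
    rw [h1, ← lintegral_map hφmeas (hpj.prodMk hZv), hmapeq,
      lintegral_prod_symm φ hφmeas.aemeasurable]
    calc ∫⁻ z, ∫⁻ x, φ (x, z) ∂(μ.map fun ω => p ω j) ∂μ.map Zv
        ≤ ∫⁻ _, 1 ∂μ.map Zv := by
          refine lintegral_mono fun z => ?_
          by_cases hTz : 0 < T0 z
          · have heq2 : (fun x => φ (x, z)) = (Set.Iic (T0 z)).indicator
                (fun _ => ENNReal.ofReal (1 / T0 z)) := by
              funext x
              rw [hφdef]
              simp only [Set.indicator_apply, Set.mem_Iic, hTz, true_and]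
            rw [heq2, lintegral_indicator_const measurableSet_Iic]
            have hmap : (μ.map fun ω => p ω j) (Set.Iic (T0 z)) ≤ ENNReal.ofReal (T0 z) := by
              rw [Measure.map_apply hpj measurableSet_Iic]
              exact hsuper j hj (T0 z) ⟨hTz.le, hT01 z⟩
            calc ENNReal.ofReal (1 / T0 z) * (μ.map fun ω => p ω j) (Set.Iic (T0 z))
                ≤ ENNReal.ofReal (1 / T0 z) * ENNReal.ofReal (T0 z) :=
                  mul_le_mul_right hmap _
              _ = ENNReal.ofReal ((1 / T0 z) * T0 z) :=
                  (ENNReal.ofReal_mul (by positivity)).symm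
              _ = 1 := by
                  rw [one_div_mul_cancel (ne_of_gt hTz), ENNReal.ofReal_one]
          · have heq2 : (fun x => φ (x, z)) = fun _ => 0 := by
              funext x
              rw [hφdef]
              dsimp only
              rw [if_neg]
              exact fun h => hTz h.1
            rw [heq2, lintegral_const, zero_mul]
            exact zero_le_one
      _ = 1 := by simp
  have hψae : 0 ≤ᵐ[μ] ψ := Filter.Eventually.of_forall hψ0
  have hint : Integrable ψ μ := by
    refine ⟨hψmeas.aestronglyMeasurable, ?_⟩
    rw [hasFiniteIntegral_iff_ofReal hψae]
    exact lt_of_le_of_lt hlint ENNReal.one_lt_top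
  have hintle : (∫ ω, ψ ω ∂μ) ≤ 1 := by
    rw [integral_eq_lintegral_of_nonneg_ae hψae hψmeas.aestronglyMeasurable]
    calc (∫⁻ a, ENNReal.ofReal (ψ a) ∂μ).toReal ≤ (1 : ℝ≥0∞).toReal :=
        ENNReal.toReal_mono (by norm_num) hlint
      _ = 1 := by simp
  -- a.e. events
  set fibC : Set (({i : Fin m // i ∉ I j} → ℝ) × (Fin m → ℝ)) :=
    {zx | ∃ i : {i : Fin m // i ∉ I j}, zx.2 i.1 ≠ zx.1 i} with hfibCdef
  have hfibC : MeasurableSet fibC := by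
    have : fibC = ⋃ i : {i : Fin m // i ∉ I j},
        {zx : ({i : Fin m // i ∉ I j} → ℝ) × (Fin m → ℝ) | zx.2 i.1 = zx.1 i}ᶜ := by
      ext zx; simp [hfibCdef]
    rw [this]
    refine MeasurableSet.iUnion fun i => ?_
    exact (measurableSet_eq_fun
      (measurable_snd.eval : Measurable fun zx : ({i : Fin m // i ∉ I j} → ℝ) × (Fin m → ℝ) => zx.2 i.1)
      (measurable_fst.eval : Measurable fun zx : ({i : Fin m // i ∉ I j} → ℝ) × (Fin m → ℝ) => zx.1 i)).compl
  have hρfibC : ρ fibC = 0 := by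
    rw [hρdef, Measure.map_apply hpair hfibC]
    convert measure_empty
    · ext ω; simp [hfibCdef]; exact fun _ _ => rfl
    · infer_instance
  have hE1 : ∀ᵐ ω ∂μ, κ (Zv ω) (Prod.mk (Zv ω) ⁻¹' fibC) = 0 := by
    have h0 : ∫⁻ z, κ z (Prod.mk z ⁻¹' fibC) ∂ρ.fst = 0 := by
      rw [← Measure.compProd_apply hfibC, hρdis, hρfibC]
    rw [lintegral_eq_zero_iff (Kernel.measurable_kernel_prodMk_left hfibC)] at h0
    have h1 : ∀ᵐ z ∂μ.map Zv, κ z (Prod.mk z ⁻¹' fibC) = 0 := by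
      rw [← hρfst]
      exact h0.mono fun z hz => hz
    exact ae_of_ae_map hZv.aemeasurable h1
  set S2 : Set (({i : Fin m // i ∉ I j} → ℝ) × (Fin m → ℝ)) :=
    {zx | zx.2 ∈ W ∧ κ zx.1 W = 0} with hS2def
  have hS2 : MeasurableSet S2 := by
    have : S2 = (Prod.snd ⁻¹' W) ∩ ((fun zx : ({i : Fin m // i ∉ I j} → ℝ) × (Fin m → ℝ) =>
        κ zx.1 W) ⁻¹' {0}) := by
      ext zx; simp [hS2def]
    rw [this]
    exact (hW.preimage measurable_snd).inter
      (((Kernel.measurable_coe κ hW).comp measurable_fst) (measurableSet_singleton 0))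
  have hρS2 : ρ S2 = 0 := by
    rw [← hρdis, Measure.compProd_apply hS2]
    have hz : ∀ z, κ z (Prod.mk z ⁻¹' S2) = 0 := by
      intro z
      by_cases h : κ z W = 0
      · refine le_antisymm (le_trans (measure_mono ?_) h.le) zero_le
        intro x hx; exact hx.1
      · have : Prod.mk z ⁻¹' S2 = ∅ := by
          ext x
          simp only [Set.mem_preimage, hS2def, Set.mem_setOf_eq, Set.mem_empty_iff_false,
            iff_false, not_and]
          exact fun _ => h
        rw [this, measure_empty]
    simp only [hz, lintegral_zero]
  have hE2 : ∀ᵐ ω ∂μ, ¬(p ω ∈ W ∧ κ (Zv ω) W = 0) := by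
    have h2 : μ {ω | p ω ∈ W ∧ κ (Zv ω) W = 0} = 0 := by
      have hmpre : {ω | p ω ∈ W ∧ κ (Zv ω) W = 0} = (fun ω => (Zv ω, p ω)) ⁻¹' S2 := by
        ext ω; simp [hS2def]
      rw [hmpre, ← Measure.map_apply hpair hS2, ← hρdef]
      exact hρS2
    rw [ae_iff]
    simpa only [not_not] using h2
  have hE3 : ∀ᵐ ω ∂μ, 0 < p ω j := by
    have h0 : μ {ω | p ω j ≤ 0} = 0 := by
      refine le_antisymm ?_ zero_le
      simpa using hsuper j hj 0 ⟨le_refl 0, zero_le_one⟩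
    rw [ae_iff]
    simpa only [not_lt] using h0
  refine ⟨ψ, hψmeas, hψ0, hint, hintle, ?_⟩
  filter_upwards [hE1, hE2, hE3] with ω h1 h2 h3
  by_cases hU : 0 < F (Rset (tstar F q (p ω)) (p ω)) (p ω) j
  swap
  · have hU0 : F (Rset (tstar F q (p ω)) (p ω)) (p ω) j = 0 :=
      le_antisymm (not_lt.mp hU) (hF _ _ j).2.1
    rw [hU0, zero_div]
    exact mul_nonneg (div_nonneg hq.le (Nat.cast_nonneg m)) (hψ0 ω)
  · have hpW : p ω ∈ W := ⟨_, hU⟩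
    have hκW : κ (Zv ω) W ≠ 0 := fun h => h2 ⟨hpW, h⟩
    haveI : IsProbabilityMeasure (κ (Zv ω)) := by
      rw [hκdef]; infer_instance
    have hcorr : ∀ s, Gf (Zv ω) s = normU (F (insert j (Rset s (p ω))) (p ω)) := by
      intro s
      have hc0 : 0 ≤ normU (F (insert j (Rset s (p ω))) (p ω)) := normU_nonneg hF _ _
      have hfib : ∀ᵐ x ∂κ (Zv ω), x ∉ Prod.mk (Zv ω) ⁻¹' fibC :=
        (measure_eq_zero_iff_ae_notMem).mp h1
      have hae : ∀ᵐ x ∂κ (Zv ω), W.indicator (fun x => ENNReal.ofReal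
          (normU (F (insert j (Rset s x)) x))) x =
          W.indicator (fun _ => ENNReal.ofReal
            (normU (F (insert j (Rset s (p ω))) (p ω)))) x := by
        filter_upwards [hfib] with x hx
        by_cases hxW : x ∈ W
        · rw [Set.indicator_of_mem hxW, Set.indicator_of_mem hxW]
          congr 1
          have hagree : ∀ i, i ∉ I j → x i = p ω i := by
            intro i hi
            by_contra hne
            exact hx ⟨⟨i, hi⟩, hne⟩
          have hsd : Rset s x \ I j = Rset s (p ω) \ I j := by
            ext i
            simp only [mem_sdiff, Rset, mem_filter, mem_univ, true_and]
            constructor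
            · rintro ⟨ha, hb⟩
              exact ⟨by rw [← hagree i hb]; exact ha, hb⟩
            · rintro ⟨ha, hb⟩
              exact ⟨by rw [hagree i hb]; exact ha, hb⟩
          exact hbs j x (p ω) hagree hxW ⟨_, hU⟩ _ _ (mem_insert_self j _)
            (mem_insert_self j _)
            (by rw [Finset.insert_sdiff_of_mem _ (hI j),
              Finset.insert_sdiff_of_mem _ (hI j)]; exact hsd)
        · rw [Set.indicator_of_notMem hxW, Set.indicator_of_notMem hxW]
      have hκWfin : κ (Zv ω) W ≠ ⊤ := measure_ne_top _ _
      have hpos : 0 < (κ (Zv ω) W).toReal := ENNReal.toReal_pos hκW hκWfin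
      rw [hGfdef]
      dsimp only
      rw [lintegral_congr_ae hae, lintegral_indicator_const hW, ENNReal.toReal_mul,
        ENNReal.toReal_ofReal hc0, mul_div_assoc, div_self (ne_of_gt hpos), mul_one]
    have hkey := key_det hI hF hbs hq j (hp01 ω) (g := Gf (Zv ω)) hcorr hU
    obtain ⟨hA, hB⟩ := hkey
    have hjR : j ∈ Rset (tstar F q (p ω)) (p ω) := by
      by_contra h
      exact absurd ((hF _ (p ω) j).1 h) (ne_of_gt hU)
    have hpjt : p ω j ≤ tstar F q (p ω) := (mem_filter.mp hjR).2
    have hzveq : (fun i : {i : Fin m // i ∉ I j} => p ω i.1) = Zv ω := rfl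
    rw [hzveq] at hA hB
    have hpjT : p ω j ≤ T0 (Zv ω) := le_trans hpjt hA
    have hTpos : 0 < T0 (Zv ω) := lt_of_lt_of_le h3 hpjT
    have hψω : ψ ω = 1 / T0 (Zv ω) := by
      rw [hψdef]
      exact if_pos ⟨hTpos, hpjT⟩
    have hS : 0 < normU (F (Rset (tstar F q (p ω)) (p ω)) (p ω)) :=
      lt_of_lt_of_le hU (le_normU hF _ _ j)
    have hUj1 : F (Rset (tstar F q (p ω)) (p ω)) (p ω) j ≤ 1 := (hF _ _ j).2.2
    have hm : (0:ℝ) < m := by exact_mod_cast j.pos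
    rw [hψω]
    have hqm : q / (m:ℝ) * (1 / T0 (Zv ω)) = q / (m * T0 (Zv ω)) := by
      rw [div_mul_div_comm, mul_one]
    rw [hqm, div_le_div_iff₀ hS (by positivity)]
    nlinarith [hB, hUj1, mul_pos hm hTpos, hU.le, hS]

end PerJ

/-- **Focused BH under block independence (Theorem 1(iii)).**
If the null p-values are superuniform, the p-values are block independent with respect to a
collection of sets `I` with `j ∈ I j` (i.e. each `p_j` is independent of the coordinates
outside `I j`), and the filter is block simple with respect to the same collection, then
Focused BH at level `q` controls the generalized FDR: `E[FDP(U*)] ≤ q`. -/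
theorem focusedBH_FDR_control_of_blockIndep_of_blockSimple
    {Ω : Type*} [MeasurableSpace Ω] (μ : Measure Ω) [IsProbabilityMeasure μ]
    {m : ℕ} (H0 : Finset (Fin m)) (p : Ω → Fin m → ℝ)
    (hpmeas : Measurable p)
    (hp01 : ∀ ω i, p ω i ∈ Set.Icc (0 : ℝ) 1)
    (hsuper : Superuniform μ p H0)
    (I : Fin m → Finset (Fin m)) (hI : ∀ j, j ∈ I j)
    (hindep : ∀ j : Fin m, ProbabilityTheory.IndepFun
      (fun ω => p ω j) (fun ω => (fun i : {i : Fin m // i ∉ I j} => p ω i)) μ)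
    (F : Finset (Fin m) → (Fin m → ℝ) → (Fin m → ℝ))
    (hF : IsFilter F)
    (hFmeas : ∀ (R : Finset (Fin m)) (j : Fin m), Measurable (fun x : Fin m → ℝ => F R x j))
    (hblocksimple : BlockSimpleFilter F I)
    (q : ℝ) (hq : q ∈ Set.Ioo (0 : ℝ) 1) :
    ∫ ω, genFDP H0 (F (Rset (tstar F q (p ω)) (p ω)) (p ω)) ∂μ ≤ q := by
  classical
  obtain ⟨hq0, hq1⟩ := hq
  have hper : ∀ j : {j // j ∈ H0}, ∃ ψ : Ω → ℝ, Measurable ψ ∧ (∀ ω, 0 ≤ ψ ω) ∧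
      Integrable ψ μ ∧ (∫ ω, ψ ω ∂μ) ≤ 1 ∧
      ∀ᵐ ω ∂μ, F (Rset (tstar F q (p ω)) (p ω)) (p ω) j.1
        / normU (F (Rset (tstar F q (p ω)) (p ω)) (p ω)) ≤ (q / m) * ψ ω :=
    fun j => perj hpmeas hp01 hsuper hI hindep hF hFmeas hblocksimple hq0 j.1 j.2
  choose ψ hψmeas hψ0 hψint hψle hψae using hper
  set D : Ω → ℝ := fun ω => ∑ j ∈ H0.attach, (q / m) * ψ j ω with hDdef
  have hDint : Integrable D μ :=
    integrable_finset_sum _ fun j _ => (hψint j).const_mul _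
  have hball : ∀ᵐ ω ∂μ, ∀ j : {j // j ∈ H0},
      F (Rset (tstar F q (p ω)) (p ω)) (p ω) j.1
        / normU (F (Rset (tstar F q (p ω)) (p ω)) (p ω)) ≤ (q / m) * ψ j ω :=
    ae_all_iff.mpr hψae
  have hbound : ∀ᵐ ω ∂μ,
      genFDP H0 (F (Rset (tstar F q (p ω)) (p ω)) (p ω)) ≤ D ω := by
    filter_upwards [hball] with ω hb
    have hgen : genFDP H0 (F (Rset (tstar F q (p ω)) (p ω)) (p ω)) =
        ∑ j ∈ H0.attach, F (Rset (tstar F q (p ω)) (p ω)) (p ω) j.1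
          / normU (F (Rset (tstar F q (p ω)) (p ω)) (p ω)) := by
      rw [genFDP, Finset.sum_div, ← Finset.sum_attach H0
        (fun j => F (Rset (tstar F q (p ω)) (p ω)) (p ω) j
          / ∑ i, F (Rset (tstar F q (p ω)) (p ω)) (p ω) i)]
      rfl
    rw [hgen, hDdef]
    exact Finset.sum_le_sum fun j _ => hb j
  have hnonneg : 0 ≤ᵐ[μ] fun ω =>
      genFDP H0 (F (Rset (tstar F q (p ω)) (p ω)) (p ω)) := by
    refine Filter.Eventually.of_forall fun ω => ?_
    exact div_nonneg (Finset.sum_nonneg fun i _ => (hF _ _ i).2.1)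
      (Finset.sum_nonneg fun i _ => (hF _ _ i).2.1)
  refine le_trans (integral_mono_of_nonneg hnonneg hDint hbound) ?_
  have hDint' : ∫ ω, D ω ∂μ = ∑ j ∈ H0.attach, (q / m) * ∫ ω, ψ j ω ∂μ := by
    rw [hDdef, integral_finset_sum _ fun j _ => (hψint j).const_mul _]
    exact Finset.sum_congr rfl fun j _ => integral_const_mul _ _
  rw [hDint']
  have hstep : ∑ j ∈ H0.attach, (q / m) * ∫ ω, ψ j ω ∂μ ≤
      ∑ _j ∈ H0.attach, (q / (m:ℝ)) := by
    refine Finset.sum_le_sum fun j _ => ?_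
    calc (q / (m:ℝ)) * ∫ ω, ψ j ω ∂μ ≤ (q / m) * 1 :=
          mul_le_mul_of_nonneg_left (hψle j) (div_nonneg hq0.le (Nat.cast_nonneg m))
      _ = q / m := mul_one _
  refine le_trans hstep ?_
  have hcc : ∑ _j ∈ H0.attach, (q / (m:ℝ)) = (H0.card : ℝ) * (q / m) := by
    simp [Finset.sum_const, Finset.card_attach, nsmul_eq_mul]
  rw [hcc]
  have hcardm : H0.card ≤ m := by
    have h1 := Finset.card_le_univ H0
    have h2 : Fintype.card (Fin m) = m := Fintype.card_fin m
    omega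
  rcases Nat.eq_zero_or_pos m with hm | hm
  · have hcard : H0.card = 0 := by omega
    rw [hcard]
    simpa using hq0.le
  · have hmr : (0:ℝ) < m := by exact_mod_cast hm
    have hcard : (H0.card : ℝ) ≤ (m : ℝ) := by exact_mod_cast hcardm
    calc (H0.card : ℝ) * (q / m) ≤ (m : ℝ) * (q / m) :=
          mul_le_mul_of_nonneg_right hcard (div_nonneg hq0.le hmr.le)
      _ = q := by field_simp
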